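/- Let B₁, B₂, B₃ be n×n real matrices and let M : ℝ → M_{2n}(ℝ) be the fundamental solution (M(0) = I) of the linear matrix ODE M'(t) = [[B₁, B₂],[−B₃, −B₁ᵀ]]·M(t), written in n×n blocks as M(t) = [[M₁(t), M₂(t)],[M₃(t), M₄(t)]]. Fix an n×n matrix S₀ and let t range over an interval around 0 on which M₃(t)S₀ + M₄(t) is invertible. Then S(t) := (M₁(t)S₀ + M₂(t))·(M₃(t)S₀ + M₄(t))⁻¹ satisfies S(0) = S₀ and solves the matrix Riccati equation S'(t) = B₂ + B₁ S(t) + S(t) B₁ᵀ + S(t) B₃ S(t). -/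

import Mathlib

noncomputable section
open Real Set Matrix Filter

/-- The candidate Riccati solution `S(t) = (M₁(t)S₀ + M₂(t))(M₃(t)S₀ + M₄(t))⁻¹` built from
the block decomposition of the fundamental solution `M` of a linear matrix ODE. -/
def riccatiSol {n : ℕ} (M : ℝ → Matrix (Fin n ⊕ Fin n) (Fin n ⊕ Fin n) ℝ)
    (S₀ : Matrix (Fin n) (Fin n) ℝ) (t : ℝ) : Matrix (Fin n) (Fin n) ℝ :=
  ((M t).toBlocks₁₁ * S₀ + (M t).toBlocks₁₂) * ((M t).toBlocks₂₁ * S₀ + (M t).toBlocks₂₂)⁻¹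

section Aux

attribute [local instance] Matrix.linftyOpNormedRing Matrix.linftyOpNormedAlgebra

private theorem clequiv_hasDerivAt_iff {E F : Type*} [NormedAddCommGroup E] [NormedSpace ℝ E]
    [NormedAddCommGroup F] [NormedSpace ℝ F] (e : E ≃L[ℝ] F) {f : ℝ → E} {f' : E} {t : ℝ} :
    HasDerivAt (fun τ => e (f τ)) (e f') t ↔ HasDerivAt f f' t := by
  constructor
  · intro h
    have := e.symm.toContinuousLinearMap.hasFDerivAt.comp_hasDerivAt t h
    simpa [Function.comp_def] using this
  · intro h
    exact e.toContinuousLinearMap.hasFDerivAt.comp_hasDerivAt t h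

/-- Entrywise differentiability is the same as matrix-valued differentiability
(with the `L∞`-operator norm). -/
private theorem hasDerivAt_matrix {m : Type*} [Fintype m] [DecidableEq m]
    {f : ℝ → Matrix m m ℝ} {f' : Matrix m m ℝ} {t : ℝ} :
    HasDerivAt f f' t ↔ ∀ i j, HasDerivAt (fun τ => f τ i j) (f' i j) t := by
  let e : Matrix m m ℝ ≃ₗ[ℝ] (m → m → ℝ) :=
    { Matrix.of.symm with map_add' := fun _ _ => rfl, map_smul' := fun _ _ => rfl }
  refine Iff.trans (clequiv_hasDerivAt_iff (f := f) (f' := f') e.toContinuousLinearEquiv).symm ?_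
  rw [hasDerivAt_pi]
  refine forall_congr' fun i => ?_
  rw [hasDerivAt_pi]
  rfl

/-- **Riccati solutions from fundamental solutions of linear ODEs** (Theorem 3.4):
if `M' = [[B₁, B₂], [−B₃, −B₁ᵀ]]·M` with `M(0) = I`, and `M₃(t)S₀ + M₄(t)` is invertible on
an interval around `0`, then `S(t) = (M₁(t)S₀ + M₂(t))(M₃(t)S₀ + M₄(t))⁻¹` satisfies
`S(0) = S₀` and solves `S' = B₂ + B₁S + SB₁ᵀ + SB₃S` there. -/
theorem riccati_from_fundamental_solution (n : ℕ)
    (B₁ B₂ B₃ : Matrix (Fin n) (Fin n) ℝ)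
    (M : ℝ → Matrix (Fin n ⊕ Fin n) (Fin n ⊕ Fin n) ℝ)
    (hM0 : M 0 = 1)
    (hM : ∀ t : ℝ, ∀ i j, HasDerivAt (fun τ => M τ i j)
      ((Matrix.fromBlocks B₁ B₂ (-B₃) (-B₁ᵀ) * M t) i j) t)
    (S₀ : Matrix (Fin n) (Fin n) ℝ)
    (a b : ℝ) (ha : a < 0) (hb : 0 < b)
    (hinv : ∀ t ∈ Ioo a b, IsUnit ((M t).toBlocks₂₁ * S₀ + (M t).toBlocks₂₂)) :
    riccatiSol M S₀ 0 = S₀ ∧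
    ∀ t ∈ Ioo a b, ∀ i j, HasDerivAt (fun τ => riccatiSol M S₀ τ i j)
      ((B₂ + B₁ * riccatiSol M S₀ t + riccatiSol M S₀ t * B₁ᵀ
        + riccatiSol M S₀ t * B₃ * riccatiSol M S₀ t) i j) t := by
  classical
  set A : Matrix (Fin n ⊕ Fin n) (Fin n ⊕ Fin n) ℝ := Matrix.fromBlocks B₁ B₂ (-B₃) (-B₁ᵀ)
    with hAdef
  set P : ℝ → Matrix (Fin n) (Fin n) ℝ :=
    fun τ => (M τ).toBlocks₁₁ * S₀ + (M τ).toBlocks₁₂ with hPdef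
  set Q : ℝ → Matrix (Fin n) (Fin n) ℝ :=
    fun τ => (M τ).toBlocks₂₁ * S₀ + (M τ).toBlocks₂₂ with hQdef
  have hric : ∀ τ, riccatiSol M S₀ τ = P τ * (Q τ)⁻¹ := fun τ => rfl
  constructor
  · have h11 : (M 0).toBlocks₁₁ = 1 := by
      rw [hM0, ← Matrix.fromBlocks_one, Matrix.toBlocks_fromBlocks₁₁]
    have h12 : (M 0).toBlocks₁₂ = 0 := by
      rw [hM0, ← Matrix.fromBlocks_one, Matrix.toBlocks_fromBlocks₁₂]
    have h21 : (M 0).toBlocks₂₁ = 0 := by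
      rw [hM0, ← Matrix.fromBlocks_one, Matrix.toBlocks_fromBlocks₂₁]
    have h22 : (M 0).toBlocks₂₂ = 1 := by
      rw [hM0, ← Matrix.fromBlocks_one, Matrix.toBlocks_fromBlocks₂₂]
    simp [riccatiSol, h11, h12, h21, h22, inv_one]
  · intro t ht i j
    have hu : IsUnit (Q t) := hinv t ht
    have hud : IsUnit (Q t).det := (Matrix.isUnit_iff_isUnit_det _).mp hu
    have hQQ : Q t * (Q t)⁻¹ = 1 := Matrix.mul_nonsing_inv _ hud
    -- block identity for `A * M τ`
    have hblock : A * M t =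
        Matrix.fromBlocks
          (B₁ * (M t).toBlocks₁₁ + B₂ * (M t).toBlocks₂₁)
          (B₁ * (M t).toBlocks₁₂ + B₂ * (M t).toBlocks₂₂)
          ((-B₃) * (M t).toBlocks₁₁ + (-B₁ᵀ) * (M t).toBlocks₂₁)
          ((-B₃) * (M t).toBlocks₁₂ + (-B₁ᵀ) * (M t).toBlocks₂₂) := by
      conv_lhs => rw [hAdef, ← Matrix.fromBlocks_toBlocks (M t), Matrix.fromBlocks_multiply]
    have e11 : (A * M t).toBlocks₁₁ = B₁ * (M t).toBlocks₁₁ + B₂ * (M t).toBlocks₂₁ := by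
      rw [hblock, Matrix.toBlocks_fromBlocks₁₁]
    have e12 : (A * M t).toBlocks₁₂ = B₁ * (M t).toBlocks₁₂ + B₂ * (M t).toBlocks₂₂ := by
      rw [hblock, Matrix.toBlocks_fromBlocks₁₂]
    have e21 : (A * M t).toBlocks₂₁ = (-B₃) * (M t).toBlocks₁₁ + (-B₁ᵀ) * (M t).toBlocks₂₁ := by
      rw [hblock, Matrix.toBlocks_fromBlocks₂₁]
    have e22 : (A * M t).toBlocks₂₂ = (-B₃) * (M t).toBlocks₁₂ + (-B₁ᵀ) * (M t).toBlocks₂₂ := by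
      rw [hblock, Matrix.toBlocks_fromBlocks₂₂]
    -- derivatives of the four blocks
    have hd11 : HasDerivAt (fun τ => (M τ).toBlocks₁₁) ((A * M t).toBlocks₁₁) t :=
      hasDerivAt_matrix.mpr fun i j => hM t (Sum.inl i) (Sum.inl j)
    have hd12 : HasDerivAt (fun τ => (M τ).toBlocks₁₂) ((A * M t).toBlocks₁₂) t :=
      hasDerivAt_matrix.mpr fun i j => hM t (Sum.inl i) (Sum.inr j)
    have hd21 : HasDerivAt (fun τ => (M τ).toBlocks₂₁) ((A * M t).toBlocks₂₁) t :=
      hasDerivAt_matrix.mpr fun i j => hM t (Sum.inr i) (Sum.inl j)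
    have hd22 : HasDerivAt (fun τ => (M τ).toBlocks₂₂) ((A * M t).toBlocks₂₂) t :=
      hasDerivAt_matrix.mpr fun i j => hM t (Sum.inr i) (Sum.inr j)
    -- derivative of P and Q
    have hP : HasDerivAt P (B₁ * P t + B₂ * Q t) t := by
      have h := (hd11.mul_const S₀).add hd12
      convert h using 1
      · rfl
      · rfl
      · rfl
      · rfl
      rw [e11, e12, hPdef, hQdef]
      noncomm_ring
    have hQ : HasDerivAt Q ((-B₃) * P t + (-B₁ᵀ) * Q t) t := by
      have h := (hd21.mul_const S₀).add hd22
      convert h using 1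
      · rfl
      · rfl
      · rfl
      · rfl
      rw [e21, e22, hPdef, hQdef]
      noncomm_ring
    -- derivative of Q⁻¹
    have hcoe : (↑hu.unit⁻¹ : Matrix (Fin n) (Fin n) ℝ) = (Q t)⁻¹ := by
      rw [Matrix.nonsing_inv_eq_ringInverse]
      conv_rhs => rw [← hu.unit_spec]
      rw [Ring.inverse_unit]
    have hQinv : HasDerivAt (fun τ => (Q τ)⁻¹)
        (-((Q t)⁻¹ * ((-B₃) * P t + (-B₁ᵀ) * Q t) * (Q t)⁻¹)) t := by
      have hcomp := (hasFDerivAt_ringInverse (𝕜 := ℝ) hu.unit).comp_hasDerivAt_of_eq t hQ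
        hu.unit_spec.symm
      have hfun : (fun τ => (Q τ)⁻¹) = Ring.inverse ∘ Q := by
        funext τ; exact Matrix.nonsing_inv_eq_ringInverse (Q τ)
      rw [hfun]
      simp [hcoe, ContinuousLinearMap.mulLeftRight_apply, mul_assoc] at hcomp ⊢
      exact hcomp
    -- derivative of S = P * Q⁻¹
    have hS := hP.mul hQinv
    have key : (B₁ * P t + B₂ * Q t) * (Q t)⁻¹
          + P t * -((Q t)⁻¹ * ((-B₃) * P t + (-B₁ᵀ) * Q t) * (Q t)⁻¹)
        = B₂ + B₁ * (P t * (Q t)⁻¹) + (P t * (Q t)⁻¹) * B₁ᵀ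
          + (P t * (Q t)⁻¹) * B₃ * (P t * (Q t)⁻¹) := by
      have expand : (B₁ * P t + B₂ * Q t) * (Q t)⁻¹
            + P t * -((Q t)⁻¹ * ((-B₃) * P t + (-B₁ᵀ) * Q t) * (Q t)⁻¹)
          = B₂ * (Q t * (Q t)⁻¹) + B₁ * (P t * (Q t)⁻¹)
            + (P t * (Q t)⁻¹) * B₁ᵀ * (Q t * (Q t)⁻¹)
            + (P t * (Q t)⁻¹) * B₃ * (P t * (Q t)⁻¹) := by
        noncomm_ring
      rw [expand, hQQ, mul_one, mul_one]
    rw [key] at hS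
    simp only [hric]
    exact hasDerivAt_matrix.mp hS i j

end Aux
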